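/- If f₁, ..., fₙ are vectors in a Banach space with T_t fⱼ = e^{iθⱼt} fⱼ for all t ≥ 0, where (T_t) is a contraction semigroup and θⱼ ∈ ℝ, then for every ε > 0 there exists t ≥ 1 such that ‖T_t f - f‖ ≤ ε ‖f‖ for all f in the linear span of f₁, ..., fₙ. -/

import Mathlib

open Complex

/-- Simultaneous recurrence for finitely many rotations: for every `δ > 0`
there exists `t ≥ 1` with `|exp(iθⱼt) - 1| ≤ δ` for all `j`. -/
lemma simultaneous_recurrence (n : ℕ) (θ : Fin n → ℝ) {δ : ℝ} (hδ : 0 < δ) :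
    ∃ t : ℝ, 1 ≤ t ∧ ∀ j, ‖Complex.exp (Complex.I * (θ j * t)) - 1‖ ≤ δ := by
  classical
  set u : ℕ → Fin n → ℂ := fun k j => Complex.exp (Complex.I * (θ j * (k : ℝ))) with hu
  have humem : ∀ k, u k ∈ Metric.closedBall (0 : Fin n → ℂ) 1 := by
    intro k
    rw [Metric.mem_closedBall, dist_zero_right]
    refine pi_norm_le_iff_of_nonneg zero_le_one |>.2 fun j => ?_
    simp [hu, Complex.norm_exp]
  obtain ⟨x, -, φ, hφ, hconv⟩ :=
    (isCompact_closedBall (0 : Fin n → ℂ) 1).tendsto_subseq humem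
  have hcauchy : CauchySeq (u ∘ φ) := hconv.cauchySeq
  obtain ⟨N, hN⟩ := Metric.cauchySeq_iff'.1 hcauchy δ hδ
  have hkl : φ N < φ (N + 1) := hφ (Nat.lt_succ_self N)
  set k := φ N
  set l := φ (N + 1)
  refine ⟨(l : ℝ) - (k : ℝ), by
    have : (k : ℝ) + 1 ≤ l := by exact_mod_cast hkl
    linarith, ?_⟩
  intro j
  have hdist : dist (u l) (u k) < δ := hN (N + 1) (Nat.le_succ N)
  have hdj : dist (u l j) (u k j) ≤ dist (u l) (u k) := dist_le_pi_dist _ _ j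
  have e2 : Complex.I * ((θ j : ℂ) * ((k : ℝ) : ℂ)) + -(Complex.I * ((θ j : ℂ) * ((k : ℝ) : ℂ))) = 0 := by
    ring
  have e1 : Complex.I * ((θ j : ℂ) * (((l : ℝ) : ℂ) - ((k : ℝ) : ℂ))) =
      Complex.I * ((θ j : ℂ) * ((l : ℝ) : ℂ)) + -(Complex.I * ((θ j : ℂ) * ((k : ℝ) : ℂ))) := by
    push_cast; ring
  have key : Complex.exp (Complex.I * (θ j * ((l : ℝ) - (k : ℝ)))) - 1 =
      (u l j - u k j) * Complex.exp (-(Complex.I * (θ j * (k : ℝ)))) := by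
    simp only [hu]
    rw [sub_mul, ← Complex.exp_add, ← Complex.exp_add, e2, Complex.exp_zero, e1]
  push_cast
  calc ‖Complex.exp (Complex.I * (θ j * ((l : ℝ) - (k : ℝ)))) - 1‖
      = ‖u l j - u k j‖ * ‖Complex.exp (-(Complex.I * (θ j * (k : ℝ))))‖ := by
        rw [key, norm_mul]
    _ = ‖u l j - u k j‖ := by
        simp [Complex.norm_exp]
    _ ≤ δ := by rw [← dist_eq_norm]; exact le_of_lt (lt_of_le_of_lt hdj hdist)

/-- Lemma 2 (finite-dimensional step): if `f₁, ..., fₙ` are eigenvectors of a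
contraction semigroup with purely imaginary eigenvalues `iθⱼ`, then for every
`ε > 0` there is `t ≥ 1` with `‖T_t f - f‖ ≤ ε ‖f‖` on the span of the `fⱼ`. -/
theorem contraction_semigroup_return_on_span
    {B : Type*} [NormedAddCommGroup B] [NormedSpace ℂ B] [CompleteSpace B]
    (T : ℝ → B →L[ℂ] B)
    (hsem : ∀ s t : ℝ, 0 ≤ s → 0 ≤ t → T (s + t) = (T s).comp (T t))
    (hcontr : ∀ t : ℝ, 0 ≤ t → ∀ g : B, ‖T t g‖ ≤ ‖g‖)
    (n : ℕ) (f : Fin n → B) (θ : Fin n → ℝ)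
    (heig : ∀ t : ℝ, 0 ≤ t → ∀ j, T t (f j) = Complex.exp (Complex.I * (θ j * t)) • f j) :
    ∀ ε > 0, ∃ t : ℝ, 1 ≤ t ∧
      ∀ g ∈ Submodule.span ℂ (Set.range f), ‖T t g - g‖ ≤ ε * ‖g‖ := by
  classical
  intro ε hε
  obtain ⟨b, hbs, hspan, hli⟩ := exists_linearIndependent ℂ (Set.range f)
  have hbfin : b.Finite := (Set.finite_range f).subset hbs
  haveI : Fintype b := hbfin.fintype
  haveI hWfd : FiniteDimensional ℂ ↥(Submodule.span ℂ (Set.range ((↑) : b → B))) := by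
    rw [Subtype.range_coe]
    exact FiniteDimensional.span_of_finite ℂ hbfin
  set Bas : Module.Basis b ℂ (Submodule.span ℂ (Set.range ((↑) : b → B))) := Module.Basis.span hli with hBas
  set C : ℝ := ∑ x : b, ‖LinearMap.toContinuousLinearMap (Bas.coord x)‖ * ‖(x : B)‖ with hC
  have hC0 : 0 ≤ C := by
    rw [hC]; positivity
  have hδ : 0 < ε / (C + 1) := div_pos hε (by linarith)
  obtain ⟨t, ht1, htj⟩ := simultaneous_recurrence n θ hδ
  have ht0 : (0 : ℝ) ≤ t := le_trans zero_le_one ht1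
  refine ⟨t, ht1, ?_⟩
  intro g hg
  have hgW : g ∈ Submodule.span ℂ (Set.range ((↑) : b → B)) := by
    rw [Subtype.range_coe, hspan]; exact hg
  set gW : Submodule.span ℂ (Set.range ((↑) : b → B)) := ⟨g, hgW⟩ with hgWdef
  have hrepr : (∑ x : b, Bas.repr gW x • (x : B)) = g := by
    have h := congrArg (Submodule.subtype _) (Bas.sum_repr gW)
    simpa [hBas, map_sum, map_smul, Module.Basis.span_apply] using h
  choose jx hjx using fun x : b => hbs x.2
  have hTt : T t g - g = ∑ x : b,
      Bas.repr gW x • ((Complex.exp (Complex.I * (θ (jx x) * t)) - 1) • (x : B)) := by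
    conv_lhs => rw [← hrepr]
    rw [map_sum, ← Finset.sum_sub_distrib]
    refine Finset.sum_congr rfl fun x _ => ?_
    rw [map_smul, ← hjx x, heig t ht0 (jx x), hjx x, ← smul_sub, sub_smul, one_smul]
  have hcoord : ∀ x : b, ‖Bas.repr gW x‖ ≤
      ‖LinearMap.toContinuousLinearMap (Bas.coord x)‖ * ‖g‖ := by
    intro x
    have := (LinearMap.toContinuousLinearMap (Bas.coord x)).le_opNorm gW
    simpa [Module.Basis.coord_apply] using this
  calc ‖T t g - g‖
      ≤ ∑ x : b, ‖Bas.repr gW x • ((Complex.exp (Complex.I * (θ (jx x) * t)) - 1) • (x : B))‖ := by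
        rw [hTt]; exact norm_sum_le _ _
    _ ≤ ∑ x : b, (‖LinearMap.toContinuousLinearMap (Bas.coord x)‖ * ‖g‖) *
          ((ε / (C + 1)) * ‖(x : B)‖) := by
        refine Finset.sum_le_sum fun x _ => ?_
        rw [norm_smul, norm_smul]
        exact mul_le_mul (hcoord x)
          (mul_le_mul_of_nonneg_right (htj (jx x)) (norm_nonneg _))
          (by positivity)
          (by positivity)
    _ = (ε / (C + 1)) * C * ‖g‖ := by
        rw [Finset.mul_sum, Finset.sum_mul]
        exact Finset.sum_congr rfl fun x _ => by ring
    _ ≤ ε * ‖g‖ := by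
        have h1 : ε / (C + 1) * C ≤ ε := by
          rw [div_mul_eq_mul_div, div_le_iff₀ (by linarith : (0:ℝ) < C + 1)]
          nlinarith
        exact mul_le_mul_of_nonneg_right h1 (norm_nonneg _)
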